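/- arXiv:2110.06906 — 7 statements merged into one kernel-verified Lean document; each statement's English description precedes it below -/
import Mathlib

section
/- Let D = diag(d(1), …, d(N)) be an N×N diagonal matrix, let P be an N×N row-stochastic matrix, let Q be an N×N real matrix satisfying 0 ≤ Q_{ij} ≤ C · P_{ij} for all i, j, where C > 1 is a constant, and let Φ be an N×k real matrix whose rows φ(s) satisfy ‖φ(s)‖₂ ≤ B_φ. Then for all natural numbers m and n: trace(Q^m P^n Φ Φᵀ D) ≤ C^m B_φ² ‖d‖₁ and trace(P^n Q^m Φ Φᵀ D) ≤ C^m B_φ² ‖d‖₁. -/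
open Matrix BigOperators

section Aux

variable {N : ℕ}

lemma aux_mul_nonneg {A B : Matrix (Fin N) (Fin N) ℝ}
    (hA : ∀ i j, 0 ≤ A i j) (hB : ∀ i j, 0 ≤ B i j) :
    ∀ i j, 0 ≤ (A * B) i j := by
  intro i j
  rw [Matrix.mul_apply]
  exact Finset.sum_nonneg fun t _ => mul_nonneg (hA i t) (hB t j)

lemma aux_pow_nonneg {A : Matrix (Fin N) (Fin N) ℝ}
    (hA : ∀ i j, 0 ≤ A i j) (m : ℕ) : ∀ i j, 0 ≤ (A ^ m) i j := by
  induction m with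
  | zero =>
      intro i j
      simp [Matrix.one_apply]
      split <;> norm_num
  | succ m ih =>
      rw [pow_succ]
      exact aux_mul_nonneg ih hA

lemma aux_rowsum_mul (A B : Matrix (Fin N) (Fin N) ℝ) (i : Fin N) :
    ∑ j, (A * B) i j = ∑ t, A i t * ∑ j, B t j := by
  simp only [Matrix.mul_apply, Finset.mul_sum]
  rw [Finset.sum_comm]

lemma aux_rowsum_pow_le {A : Matrix (Fin N) (Fin N) ℝ}
    (hA : ∀ i j, 0 ≤ A i j) {c : ℝ} (hc : 0 ≤ c)
    (h : ∀ i, ∑ j, A i j ≤ c) (m : ℕ) : ∀ i, ∑ j, (A ^ m) i j ≤ c ^ m := by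
  induction m with
  | zero => intro i; simp [Matrix.one_apply]
  | succ m ih =>
      intro i
      rw [pow_succ, aux_rowsum_mul]
      calc ∑ t, (A ^ m) i t * ∑ j, A t j
          ≤ ∑ t, (A ^ m) i t * c :=
            Finset.sum_le_sum fun t _ =>
              mul_le_mul_of_nonneg_left (h t) (aux_pow_nonneg hA m i t)
        _ = (∑ t, (A ^ m) i t) * c := by rw [← Finset.sum_mul]
        _ ≤ c ^ m * c := mul_le_mul_of_nonneg_right (ih i) hc
        _ = c ^ (m + 1) := (pow_succ c m).symm

lemma aux_rowsum_pow_eq {A : Matrix (Fin N) (Fin N) ℝ}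
    (h : ∀ i, ∑ j, A i j = 1) (m : ℕ) : ∀ i, ∑ j, (A ^ m) i j = 1 := by
  induction m with
  | zero => intro i; simp [Matrix.one_apply]
  | succ m ih =>
      intro i
      rw [pow_succ, aux_rowsum_mul]
      simp [h, ih]

lemma aux_trace_bound {k : ℕ} (A : Matrix (Fin N) (Fin N) ℝ)
    (hA : ∀ i j, 0 ≤ A i j) (c : ℝ) (hc : 0 ≤ c)
    (hrow : ∀ i, ∑ j, A i j ≤ c)
    (Φ : Matrix (Fin N) (Fin k) ℝ) (Bφ : ℝ)
    (hΦ : ∀ s, Real.sqrt (∑ j, (Φ s j) ^ 2) ≤ Bφ) (d : Fin N → ℝ) :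
    Matrix.trace (A * Φ * Φᵀ * Matrix.diagonal d) ≤ c * Bφ ^ 2 * ∑ s, |d s| := by
  have hG : ∀ i j : Fin N, |(Φ * Φᵀ) i j| ≤ Bφ ^ 2 := by
    intro i j
    have hBφ : 0 ≤ Bφ := le_trans (Real.sqrt_nonneg _) (hΦ i)
    have hcs : (∑ t, Φ i t * Φ j t) ^ 2 ≤ (∑ t, (Φ i t) ^ 2) * (∑ t, (Φ j t) ^ 2) :=
      Finset.sum_mul_sq_le_sq_mul_sq Finset.univ _ _
    have h1 : |(Φ * Φᵀ) i j| = |∑ t, Φ i t * Φ j t| := by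
      simp [Matrix.mul_apply, Matrix.transpose_apply]
    rw [h1]
    have h2 : |∑ t, Φ i t * Φ j t| = Real.sqrt ((∑ t, Φ i t * Φ j t) ^ 2) := by
      rw [Real.sqrt_sq_eq_abs]
    rw [h2]
    calc Real.sqrt ((∑ t, Φ i t * Φ j t) ^ 2)
        ≤ Real.sqrt ((∑ t, (Φ i t) ^ 2) * (∑ t, (Φ j t) ^ 2)) := Real.sqrt_le_sqrt hcs
      _ = Real.sqrt (∑ t, (Φ i t) ^ 2) * Real.sqrt (∑ t, (Φ j t) ^ 2) := by
          rw [Real.sqrt_mul (Finset.sum_nonneg fun t _ => sq_nonneg _)]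
      _ ≤ Bφ * Bφ := mul_le_mul (hΦ i) (hΦ j) (Real.sqrt_nonneg _) hBφ
      _ = Bφ ^ 2 := (sq Bφ).symm
  have hBφ2 : 0 ≤ Bφ ^ 2 := sq_nonneg _
  have htr : Matrix.trace (A * Φ * Φᵀ * Matrix.diagonal d)
      = ∑ i, (∑ j, A i j * (Φ * Φᵀ) j i) * d i := by
    rw [Matrix.trace]
    congr 1
    ext i
    rw [Matrix.diag_apply, Matrix.mul_diagonal, Matrix.mul_assoc A Φ Φᵀ, Matrix.mul_apply]
  rw [htr]
  calc ∑ i, (∑ j, A i j * (Φ * Φᵀ) j i) * d i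
      ≤ ∑ i, (∑ j, A i j * Bφ ^ 2) * |d i| := by
        refine Finset.sum_le_sum fun i _ => ?_
        calc (∑ j, A i j * (Φ * Φᵀ) j i) * d i
            ≤ |(∑ j, A i j * (Φ * Φᵀ) j i) * d i| := le_abs_self _
          _ = |∑ j, A i j * (Φ * Φᵀ) j i| * |d i| := abs_mul _ _
          _ ≤ (∑ j, |A i j * (Φ * Φᵀ) j i|) * |d i| :=
              mul_le_mul_of_nonneg_right (Finset.abs_sum_le_sum_abs _ _) (abs_nonneg _)
          _ ≤ (∑ j, A i j * Bφ ^ 2) * |d i| := by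
              refine mul_le_mul_of_nonneg_right ?_ (abs_nonneg _)
              refine Finset.sum_le_sum fun j _ => ?_
              rw [abs_mul, abs_of_nonneg (hA i j)]
              exact mul_le_mul_of_nonneg_left (hG j i) (hA i j)
    _ ≤ ∑ i, (c * Bφ ^ 2) * |d i| := by
        refine Finset.sum_le_sum fun i _ => ?_
        refine mul_le_mul_of_nonneg_right ?_ (abs_nonneg _)
        rw [← Finset.sum_mul]
        exact mul_le_mul_of_nonneg_right (hrow i) hBφ2
    _ = c * Bφ ^ 2 * ∑ s, |d s| := by rw [← Finset.mul_sum]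

end Aux

/-- For a diagonal matrix `D = diag d`, a row-stochastic matrix `P`,
a matrix `Q` with `0 ≤ Q i j ≤ C * P i j` (`C > 1`), and a feature matrix `Φ` whose
rows have Euclidean norm at most `B_φ`, for all `m n : ℕ`:
`trace (Q^m * P^n * Φ * Φᵀ * D) ≤ C^m * B_φ² * ‖d‖₁` and
`trace (P^n * Q^m * Φ * Φᵀ * D) ≤ C^m * B_φ² * ‖d‖₁`. -/
theorem trace_kernel_feature_bound (N k : ℕ) (d : Fin N → ℝ)
    (P Q : Matrix (Fin N) (Fin N) ℝ)
    (hP0 : ∀ i j, 0 ≤ P i j) (hProw : ∀ i, ∑ j, P i j = 1)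
    (C : ℝ) (hC : 1 < C)
    (hQ0 : ∀ i j, 0 ≤ Q i j) (hQC : ∀ i j, Q i j ≤ C * P i j)
    (Φ : Matrix (Fin N) (Fin k) ℝ) (Bφ : ℝ)
    (hΦ : ∀ s, Real.sqrt (∑ j, (Φ s j) ^ 2) ≤ Bφ)
    (m n : ℕ) :
    Matrix.trace (Q ^ m * P ^ n * Φ * Φᵀ * Matrix.diagonal d) ≤
        C ^ m * Bφ ^ 2 * ∑ s, |d s| ∧
    Matrix.trace (P ^ n * Q ^ m * Φ * Φᵀ * Matrix.diagonal d) ≤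
        C ^ m * Bφ ^ 2 * ∑ s, |d s| := by
  have hC0 : (0:ℝ) ≤ C := le_of_lt (lt_trans one_pos hC)
  have hQrow : ∀ i, ∑ j, Q i j ≤ C := by
    intro i
    calc ∑ j, Q i j ≤ ∑ j, C * P i j := Finset.sum_le_sum fun j _ => hQC i j
      _ = C * ∑ j, P i j := by rw [Finset.mul_sum]
      _ = C := by rw [hProw i, mul_one]
  have hQm0 := aux_pow_nonneg hQ0 m
  have hPn0 := aux_pow_nonneg hP0 n
  have hQmrow := aux_rowsum_pow_le hQ0 hC0 hQrow m
  have hPnrow := aux_rowsum_pow_eq hProw n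
  have hCm0 : (0:ℝ) ≤ C ^ m := pow_nonneg hC0 m
  constructor
  · refine aux_trace_bound _ (aux_mul_nonneg hQm0 hPn0) (C ^ m) hCm0 ?_ Φ Bφ hΦ d
    intro i
    rw [aux_rowsum_mul]
    calc ∑ t, (Q ^ m) i t * ∑ j, (P ^ n) t j
        = ∑ t, (Q ^ m) i t := by simp [hPnrow]
      _ ≤ C ^ m := hQmrow i
  · refine aux_trace_bound _ (aux_mul_nonneg hPn0 hQm0) (C ^ m) hCm0 ?_ Φ Bφ hΦ d
    intro i
    rw [aux_rowsum_mul]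
    calc ∑ t, (P ^ n) i t * ∑ j, (Q ^ m) t j
        ≤ ∑ t, (P ^ n) i t * C ^ m :=
          Finset.sum_le_sum fun t _ => mul_le_mul_of_nonneg_left (hQmrow t) (hPn0 i t)
      _ = (∑ t, (P ^ n) i t) * C ^ m := by rw [← Finset.sum_mul]
      _ = C ^ m := by rw [hPnrow i, one_mul]
end

section
/- Let P be an N×N row-stochastic matrix, let γ, χ ∈ (0,1) with γ ≠ χ, let C_M ≥ 0, and let b ≥ 1 be an integer. Let d, d₁, …, d_b ∈ ℝ^N satisfy ‖d − d_τ‖₁ ≤ C_M χ^τ for τ = 1, …, b. Let f ∈ ℝ^N satisfy f = d + γ Pᵀ f, let f₀ ∈ ℝ^N with ‖f₀‖₁ ≤ 1, and define f_τ = d_τ + γ Pᵀ f_{τ−1} for τ = 1, …, b. Then ‖f − f_b‖₁ ≤ (C_M / |χ − γ|) ξ^b + γ^b (1 + ‖f‖₁), where ξ = max{γ, χ}. -/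
open Matrix BigOperators

lemma geom_sum_bound (r : ℝ) (h0 : 0 ≤ r) (h1 : r < 1) (n : ℕ) :
    ∑ j ∈ Finset.range n, r ^ j ≤ 1 / (1 - r) := by
  have hm := geom_sum_mul r n
  rw [le_div_iff₀ (by linarith)]
  nlinarith [pow_nonneg h0 n]

lemma l1_contract (N : ℕ) (P : Matrix (Fin N) (Fin N) ℝ)
    (hP0 : ∀ i j, 0 ≤ P i j) (hProw : ∀ i, ∑ j, P i j = 1) (x : Fin N → ℝ) :
    ∑ i, |(Pᵀ *ᵥ x) i| ≤ ∑ i, |x i| := by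
  have h1 : ∀ i, |(Pᵀ *ᵥ x) i| ≤ ∑ j, P j i * |x j| := by
    intro i
    calc |(Pᵀ *ᵥ x) i| = |∑ j, P j i * x j| := by
          simp [Matrix.mulVec, Matrix.transpose_apply, dotProduct]
      _ ≤ ∑ j, |P j i * x j| := Finset.abs_sum_le_sum_abs _ _
      _ = ∑ j, P j i * |x j| := by
          refine Finset.sum_congr rfl fun j _ => ?_
          rw [abs_mul, abs_of_nonneg (hP0 j i)]
  calc ∑ i, |(Pᵀ *ᵥ x) i| ≤ ∑ i, ∑ j, P j i * |x j| := Finset.sum_le_sum fun i _ => h1 i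
    _ = ∑ j, (∑ i, P j i) * |x j| := by
        rw [Finset.sum_comm]
        exact Finset.sum_congr rfl fun j _ => (Finset.sum_mul ..).symm
    _ = ∑ j, |x j| := by simp [hProw]

/-- Follow-on trace ℓ1 error bound. With `P` row-stochastic,
`γ, χ ∈ (0,1)`, `γ ≠ χ`, `C_M ≥ 0`, `b ≥ 1`, `‖d - d_τ‖₁ ≤ C_M χ^τ` for `τ = 1, …, b`,
`f = d + γ Pᵀ f`, `‖f₀‖₁ ≤ 1`, and `f_τ = d_τ + γ Pᵀ f_{τ-1}` for `τ = 1, …, b`, we have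
`‖f - f_b‖₁ ≤ (C_M / |χ - γ|) ξ^b + γ^b (1 + ‖f‖₁)` where `ξ = max γ χ`. -/
theorem followon_trace_l1_bound (N : ℕ) (P : Matrix (Fin N) (Fin N) ℝ)
    (hP0 : ∀ i j, 0 ≤ P i j) (hProw : ∀ i, ∑ j, P i j = 1)
    (γ χ : ℝ) (hγ0 : 0 < γ) (hγ1 : γ < 1) (hχ0 : 0 < χ) (hχ1 : χ < 1) (hγχ : γ ≠ χ)
    (CM : ℝ) (hCM : 0 ≤ CM) (b : ℕ) (hb : 1 ≤ b)
    (d : Fin N → ℝ) (dseq : ℕ → Fin N → ℝ)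
    (hd : ∀ τ, 1 ≤ τ → τ ≤ b → ∑ i, |d i - dseq τ i| ≤ CM * χ ^ τ)
    (f : Fin N → ℝ) (hf : f = d + γ • (Pᵀ *ᵥ f))
    (F : ℕ → Fin N → ℝ) (hF0 : ∑ i, |F 0 i| ≤ 1)
    (hFrec : ∀ τ, 1 ≤ τ → τ ≤ b → F τ = dseq τ + γ • (Pᵀ *ᵥ F (τ - 1))) :
    ∑ i, |f i - F b i| ≤
      CM / |χ - γ| * (max γ χ) ^ b + γ ^ b * (1 + ∑ i, |f i|) := by
  set E0 : ℝ := ∑ i, |f i - F 0 i| with hE0def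
  set S : ℕ → ℝ := fun τ => ∑ j ∈ Finset.range τ, γ ^ j * χ ^ (τ - j) with hSdef
  -- recursion for S
  have hSrec : ∀ τ : ℕ, S (τ + 1) = χ ^ (τ + 1) + γ * S τ := by
    intro τ
    simp only [hSdef]
    rw [Finset.sum_range_succ']
    simp only [pow_zero, one_mul, Nat.sub_zero]
    rw [Finset.mul_sum]
    rw [add_comm]
    congr 1
    refine Finset.sum_congr rfl fun j hj => ?_
    have hj' : j < τ := Finset.mem_range.mp hj
    have : τ + 1 - (j + 1) = τ - j := by omega
    rw [this, pow_succ]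
    ring
  -- main induction
  have key : ∀ τ : ℕ, τ ≤ b → ∑ i, |f i - F τ i| ≤ CM * S τ + γ ^ τ * E0 := by
    intro τ
    induction τ with
    | zero => intro _; simp [hSdef, hE0def]
    | succ τ ih =>
      intro hτb
      have hτb' : τ ≤ b := by omega
      have hrec := hFrec (τ + 1) (by omega) hτb
      have hpt : ∀ i, f i - F (τ + 1) i =
          (d i - dseq (τ + 1) i) + γ * (Pᵀ *ᵥ (fun j => f j - F τ j)) i := by
        intro i
        have h1 : f i = d i + γ * (Pᵀ *ᵥ f) i := by
          conv_lhs => rw [hf]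
          simp
        have h2 : F (τ + 1) i = dseq (τ + 1) i + γ * (Pᵀ *ᵥ F τ) i := by
          conv_lhs => rw [hrec]
          simp
        have h3 : (Pᵀ *ᵥ (fun j => f j - F τ j)) i = (Pᵀ *ᵥ f) i - (Pᵀ *ᵥ F τ) i := by
          simp [Matrix.mulVec, dotProduct, mul_sub, Finset.sum_sub_distrib]
        rw [h1, h2, h3]; ring
      calc ∑ i, |f i - F (τ + 1) i|
          ≤ ∑ i, (|d i - dseq (τ + 1) i| + γ * |(Pᵀ *ᵥ (fun j => f j - F τ j)) i|) := by
            refine Finset.sum_le_sum fun i _ => ?_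
            rw [hpt i]
            refine (abs_add_le _ _).trans ?_
            rw [abs_mul, abs_of_nonneg hγ0.le]
        _ = (∑ i, |d i - dseq (τ + 1) i|) +
              γ * ∑ i, |(Pᵀ *ᵥ (fun j => f j - F τ j)) i| := by
            rw [Finset.sum_add_distrib, Finset.mul_sum]
        _ ≤ CM * χ ^ (τ + 1) + γ * (CM * S τ + γ ^ τ * E0) := by
            refine add_le_add (hd (τ + 1) (by omega) hτb) ?_
            refine mul_le_mul_of_nonneg_left ?_ hγ0.le
            refine (l1_contract N P hP0 hProw _).trans (ih hτb')
        _ = CM * S (τ + 1) + γ ^ (τ + 1) * E0 := by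
            rw [hSrec τ]; ring
  -- bound on S b
  have hSb : S b ≤ (max γ χ) ^ b / |χ - γ| := by
    rcases le_or_gt γ χ with hle | hlt
    · have hγχ' : γ < χ := lt_of_le_of_ne hle hγχ
      have hmax : max γ χ = χ := max_eq_right hle
      rw [hmax]
      have habs : |χ - γ| = χ - γ := abs_of_pos (by linarith)
      rw [habs]
      have hterm : ∀ j ∈ Finset.range b, γ ^ j * χ ^ (b - j) = χ ^ b * (γ / χ) ^ j := by
        intro j hj
        have hjb : j ≤ b := (Finset.mem_range.mp hj).le
        have hχb : χ ^ (b - j) * χ ^ j = χ ^ b := by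
          rw [← pow_add]; congr 1; omega
        rw [div_pow, ← hχb]
        field_simp
      calc S b = ∑ j ∈ Finset.range b, χ ^ b * (γ / χ) ^ j :=
            Finset.sum_congr rfl hterm
        _ = χ ^ b * ∑ j ∈ Finset.range b, (γ / χ) ^ j := by rw [Finset.mul_sum]
        _ ≤ χ ^ b * (1 / (1 - γ / χ)) := by
            refine mul_le_mul_of_nonneg_left ?_ (by positivity)
            exact geom_sum_bound _ (by positivity) (by rw [div_lt_one hχ0]; exact hγχ') b
        _ ≤ χ ^ b / (χ - γ) := by
            have h1 : 1 - γ / χ = (χ - γ) / χ := by field_simp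
            rw [h1, one_div, inv_div, ← mul_div_assoc]
            gcongr
            · exact mul_le_of_le_one_right (by positivity) hχ1.le
    · have hmax : max γ χ = γ := max_eq_left hlt.le
      rw [hmax]
      have habs : |χ - γ| = γ - χ := by rw [abs_of_neg (by linarith)]; ring
      rw [habs]
      have hterm : ∀ j ∈ Finset.range b, γ ^ j * χ ^ (b - j) = γ ^ b * (χ / γ) ^ (b - j) := by
        intro j hj
        have hjb : j ≤ b := (Finset.mem_range.mp hj).le
        have hγb : γ ^ j * γ ^ (b - j) = γ ^ b := by
          rw [← pow_add]; congr 1; omega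
        rw [div_pow, ← hγb]
        field_simp
      calc S b = ∑ j ∈ Finset.range b, γ ^ b * (χ / γ) ^ (b - j) :=
            Finset.sum_congr rfl hterm
        _ = γ ^ b * ∑ j ∈ Finset.range b, (χ / γ) ^ (b - j) := by rw [Finset.mul_sum]
        _ ≤ γ ^ b * (1 / (1 - χ / γ)) := by
            refine mul_le_mul_of_nonneg_left ?_ (by positivity)
            have hreflect : ∑ j ∈ Finset.range b, (χ / γ) ^ (b - j)
                = ∑ j ∈ Finset.range b, (χ / γ) ^ (j + 1) := by
              rw [← Finset.sum_range_reflect]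
              refine Finset.sum_congr rfl fun j hj => ?_
              have : j < b := Finset.mem_range.mp hj
              congr 1; omega
            rw [hreflect]
            have hr0 : (0:ℝ) ≤ χ / γ := by positivity
            have hr1 : χ / γ < 1 := by rw [div_lt_one hγ0]; exact hlt
            calc ∑ j ∈ Finset.range b, (χ / γ) ^ (j + 1)
                ≤ ∑ j ∈ Finset.range b, (χ / γ) ^ j := by
                  refine Finset.sum_le_sum fun j _ => ?_
                  exact pow_le_pow_of_le_one hr0 hr1.le (by omega)
              _ ≤ 1 / (1 - χ / γ) := geom_sum_bound _ hr0 hr1 b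
        _ ≤ γ ^ b / (γ - χ) := by
            have h1 : 1 - χ / γ = (γ - χ) / γ := by field_simp
            rw [h1, one_div, inv_div, ← mul_div_assoc]
            gcongr
            · exact mul_le_of_le_one_right (by positivity) hγ1.le
  -- bound on E0
  have hE0 : E0 ≤ 1 + ∑ i, |f i| := by
    calc E0 ≤ ∑ i, (|f i| + |F 0 i|) :=
          Finset.sum_le_sum fun i _ => abs_sub (f i) (F 0 i)
      _ = (∑ i, |f i|) + ∑ i, |F 0 i| := Finset.sum_add_distrib
      _ ≤ 1 + ∑ i, |f i| := by linarith
  calc ∑ i, |f i - F b i| ≤ CM * S b + γ ^ b * E0 := key b le_rfl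
    _ ≤ CM * ((max γ χ) ^ b / |χ - γ|) + γ ^ b * (1 + ∑ i, |f i|) := by
        have h1 : CM * S b ≤ CM * ((max γ χ) ^ b / |χ - γ|) :=
          mul_le_mul_of_nonneg_left hSb hCM
        have h2 : γ ^ b * E0 ≤ γ ^ b * (1 + ∑ i, |f i|) :=
          mul_le_mul_of_nonneg_left hE0 (by positivity)
        linarith
    _ = CM / |χ - γ| * (max γ χ) ^ b + γ ^ b * (1 + ∑ i, |f i|) := by ring
end

section
/- Let P be an N×N row-stochastic matrix, let Φ be an N×k real matrix whose rows φ(s) satisfy ‖φ(s)‖₂ ≤ B_φ, let 0 ≤ λ ≤ 1 and 0 < γ < 1, and let L ≥ 0. Let d₀, d₁, …, d_τ ∈ ℝ^N be probability vectors, and let f₁, …, f_τ ∈ ℝ^N be nonnegative vectors with 𝟙ᵀ f_m ≤ 1 + L for all m. Define β₀ = Φᵀ diag(d₀) and β_m = λ Φᵀ diag(d_m) + (1−λ) Φᵀ diag(f_m) + γλ β_{m−1} P for m = 1, …, τ. Then trace(Φ β_τ P) ≤ (B_φ² / (1 − γλ)) · (1 + (1−λ) L). -/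
open Matrix BigOperators

section Aux

variable {N k : ℕ}

/-- Key lemma: trace of `Φ * (Φᵀ * diag v) * Q` is bounded by `Bφ² * c` when
`v ≥ 0` sums to at most `c` and `Q` is nonnegative with row sums 1. -/
lemma trace_diag_bound (Φ : Matrix (Fin N) (Fin k) ℝ) (Bφ : ℝ)
    (hΦ : ∀ s, Real.sqrt (∑ j, (Φ s j) ^ 2) ≤ Bφ)
    (v : Fin N → ℝ) (hv0 : ∀ i, 0 ≤ v i) (c : ℝ) (hvc : ∑ i, v i ≤ c)
    (Q : Matrix (Fin N) (Fin N) ℝ)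
    (hQ0 : ∀ i j, 0 ≤ Q i j) (hQrow : ∀ i, ∑ j, Q i j = 1) :
    Matrix.trace (Φ * (Φᵀ * Matrix.diagonal v) * Q) ≤ Bφ ^ 2 * c := by
  have hCS : ∀ t s : Fin N, ∑ r, Φ t r * Φ s r ≤ Bφ ^ 2 := by
    intro t s
    have h := Real.sum_mul_le_sqrt_mul_sqrt Finset.univ (fun r => Φ t r) (fun r => Φ s r)
    have h0 : (0:ℝ) ≤ Real.sqrt (∑ j, (Φ t j) ^ 2) := Real.sqrt_nonneg _
    have h1 : (0:ℝ) ≤ Real.sqrt (∑ j, (Φ s j) ^ 2) := Real.sqrt_nonneg _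
    calc ∑ r, Φ t r * Φ s r ≤ _ := h
      _ ≤ Bφ * Bφ := mul_le_mul (hΦ t) (hΦ s) h1 (le_trans h0 (hΦ t))
      _ = Bφ ^ 2 := by ring
  have hentry : ∀ t s : Fin N,
      (Φ * (Φᵀ * Matrix.diagonal v)) t s = (∑ r, Φ t r * Φ s r) * v s := by
    intro t s
    rw [Matrix.mul_apply, Finset.sum_mul]
    exact Finset.sum_congr rfl fun r _ => by
      rw [Matrix.mul_diagonal, Matrix.transpose_apply]; ring
  have htr : Matrix.trace (Φ * (Φᵀ * Matrix.diagonal v) * Q)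
      = ∑ t, ∑ s, (∑ r, Φ t r * Φ s r) * v s * Q s t := by
    rw [Matrix.trace]
    refine Finset.sum_congr rfl fun t _ => ?_
    rw [Matrix.diag_apply, Matrix.mul_apply]
    exact Finset.sum_congr rfl fun s _ => by rw [hentry]
  rw [htr]
  calc ∑ t, ∑ s, (∑ r, Φ t r * Φ s r) * v s * Q s t
      ≤ ∑ t, ∑ s, Bφ ^ 2 * v s * Q s t := by
        refine Finset.sum_le_sum fun t _ => Finset.sum_le_sum fun s _ => ?_
        exact mul_le_mul_of_nonneg_right
          (mul_le_mul_of_nonneg_right (hCS t s) (hv0 s)) (hQ0 s t)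
    _ = ∑ s, Bφ ^ 2 * v s * (∑ t, Q s t) := by
        rw [Finset.sum_comm]; simp [Finset.mul_sum]
    _ = Bφ ^ 2 * ∑ s, v s := by
        simp only [hQrow, mul_one]; rw [Finset.mul_sum]
    _ ≤ Bφ ^ 2 * c := mul_le_mul_of_nonneg_left hvc (sq_nonneg _)

end Aux

/-- Trace bound for the calibrated eligibility-trace matrix. With `P`
row-stochastic, rows of `Φ` of Euclidean norm at most `B_φ`, `0 ≤ λ ≤ 1`, `0 < γ < 1`,
`L ≥ 0`, probability vectors `d₀, …, d_τ`, nonnegative vectors `f₁, …, f_τ` with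
`𝟙ᵀ f_m ≤ 1 + L`, and `β₀ = Φᵀ diag d₀`,
`β_m = λ Φᵀ diag d_m + (1-λ) Φᵀ diag f_m + γλ β_{m-1} P`, we have
`trace (Φ β_τ P) ≤ (B_φ² / (1 - γλ)) (1 + (1-λ) L)`. -/
theorem eligibility_trace_trace_bound (N k : ℕ)
    (P : Matrix (Fin N) (Fin N) ℝ)
    (hP0 : ∀ i j, 0 ≤ P i j) (hProw : ∀ i, ∑ j, P i j = 1)
    (Φ : Matrix (Fin N) (Fin k) ℝ) (Bφ : ℝ)
    (hΦ : ∀ s, Real.sqrt (∑ j, (Φ s j) ^ 2) ≤ Bφ)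
    (l γ L : ℝ) (hl0 : 0 ≤ l) (hl1 : l ≤ 1) (hγ0 : 0 < γ) (hγ1 : γ < 1) (hL : 0 ≤ L)
    (τ : ℕ) (dseq : ℕ → Fin N → ℝ)
    (hd0 : ∀ m, m ≤ τ → ∀ i, 0 ≤ dseq m i)
    (hd1 : ∀ m, m ≤ τ → ∑ i, dseq m i = 1)
    (fseq : ℕ → Fin N → ℝ)
    (hf0 : ∀ m, 1 ≤ m → m ≤ τ → ∀ i, 0 ≤ fseq m i)
    (hf1 : ∀ m, 1 ≤ m → m ≤ τ → ∑ i, fseq m i ≤ 1 + L)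
    (β : ℕ → Matrix (Fin k) (Fin N) ℝ)
    (hβ0 : β 0 = Φᵀ * Matrix.diagonal (dseq 0))
    (hβ : ∀ m, 1 ≤ m → m ≤ τ →
      β m = l • (Φᵀ * Matrix.diagonal (dseq m))
        + (1 - l) • (Φᵀ * Matrix.diagonal (fseq m))
        + (γ * l) • (β (m - 1) * P)) :
    Matrix.trace (Φ * β τ * P) ≤ Bφ ^ 2 / (1 - γ * l) * (1 + (1 - l) * L) := by
  set x := γ * l with hx
  have hx0 : 0 ≤ x := mul_nonneg hγ0.le hl0
  have hx1 : x < 1 := lt_of_le_of_lt (by nlinarith) hγ1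
  have hC : (0:ℝ) ≤ (1 - l) * L := mul_nonneg (by linarith) hL
  have hC1 : (1:ℝ) ≤ 1 + (1 - l) * L := by linarith
  -- The main induction
  have main : ∀ m, m ≤ τ → ∀ Q : Matrix (Fin N) (Fin N) ℝ,
      (∀ i j, 0 ≤ Q i j) → (∀ i, ∑ j, Q i j = 1) →
      Matrix.trace (Φ * β m * Q)
        ≤ Bφ ^ 2 * (1 + (1 - l) * L) * ∑ i ∈ Finset.range (m + 1), x ^ i := by
    intro m
    induction m with
    | zero =>
      intro _ Q hQ0 hQrow
      rw [hβ0]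
      have := trace_diag_bound Φ Bφ hΦ (dseq 0) (hd0 0 (Nat.zero_le _)) 1
        (le_of_eq (hd1 0 (Nat.zero_le _))) Q hQ0 hQrow
      calc Matrix.trace (Φ * (Φᵀ * Matrix.diagonal (dseq 0)) * Q) ≤ Bφ ^ 2 * 1 := this
        _ ≤ Bφ ^ 2 * (1 + (1 - l) * L) * ∑ i ∈ Finset.range 1, x ^ i := by
            simp; nlinarith [sq_nonneg Bφ]
    | succ n ih =>
      intro hm Q hQ0 hQrow
      have hn : n ≤ τ := le_trans (Nat.le_succ n) hm
      have h1m : 1 ≤ n + 1 := Nat.succ_le_succ (Nat.zero_le n)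
      have hPQ0 : ∀ i j, 0 ≤ (P * Q) i j := by
        intro i j
        rw [Matrix.mul_apply]
        exact Finset.sum_nonneg fun r _ => mul_nonneg (hP0 i r) (hQ0 r j)
      have hPQrow : ∀ i, ∑ j, (P * Q) i j = 1 := by
        intro i
        simp only [Matrix.mul_apply]
        rw [Finset.sum_comm]
        simp [← Finset.mul_sum, hQrow, hProw i]
      have hexp : Φ * β (n + 1) * Q
          = l • (Φ * (Φᵀ * Matrix.diagonal (dseq (n+1))) * Q)
          + (1 - l) • (Φ * (Φᵀ * Matrix.diagonal (fseq (n+1))) * Q)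
          + x • (Φ * β n * (P * Q)) := by
        rw [hβ (n+1) h1m hm]
        simp only [Nat.add_sub_cancel, Matrix.mul_add, Matrix.add_mul,
          Matrix.mul_smul, Matrix.smul_mul, Matrix.mul_assoc]
      have h1 := trace_diag_bound Φ Bφ hΦ (dseq (n+1)) (hd0 (n+1) hm) 1
        (le_of_eq (hd1 (n+1) hm)) Q hQ0 hQrow
      have h2 := trace_diag_bound Φ Bφ hΦ (fseq (n+1)) (hf0 (n+1) h1m hm) (1 + L)
        (hf1 (n+1) h1m hm) Q hQ0 hQrow
      have h3 := ih hn (P * Q) hPQ0 hPQrow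
      rw [hexp, Matrix.trace_add, Matrix.trace_add, Matrix.trace_smul, Matrix.trace_smul,
        Matrix.trace_smul]
      have hgeom : ∑ i ∈ Finset.range (n + 1 + 1), x ^ i
          = x * ∑ i ∈ Finset.range (n + 1), x ^ i + 1 := geom_sum_succ
      rw [hgeom]
      have hl1' : (0:ℝ) ≤ 1 - l := by linarith
      calc l • Matrix.trace (Φ * (Φᵀ * Matrix.diagonal (dseq (n+1))) * Q)
            + (1 - l) • Matrix.trace (Φ * (Φᵀ * Matrix.diagonal (fseq (n+1))) * Q)
            + x • Matrix.trace (Φ * β n * (P * Q))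
          ≤ l * (Bφ ^ 2 * 1) + (1 - l) * (Bφ ^ 2 * (1 + L))
            + x * (Bφ ^ 2 * (1 + (1 - l) * L) * ∑ i ∈ Finset.range (n + 1), x ^ i) := by
            simp only [smul_eq_mul]
            gcongr
        _ = Bφ ^ 2 * (1 + (1 - l) * L) * (x * ∑ i ∈ Finset.range (n + 1), x ^ i + 1) := by
            ring
  have hfin := main τ le_rfl P hP0 hProw
  have hxne : (0:ℝ) < 1 - x := by linarith
  have hgs : ∑ i ∈ Finset.range (τ + 1), x ^ i ≤ 1 / (1 - x) := by
    rw [geom_sum_eq (by linarith : x ≠ 1)]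
    have h1 : x - 1 ≠ 0 := by intro h; linarith
    have h2 : (1:ℝ) - x ≠ 0 := by intro h; linarith
    have heq : (x ^ (τ + 1) - 1) / (x - 1) = (1 - x ^ (τ + 1)) / (1 - x) := by
      rw [div_eq_div_iff h1 h2]; ring
    rw [heq]
    have : 0 ≤ x ^ (τ + 1) := pow_nonneg hx0 _
    gcongr
    linarith
  calc Matrix.trace (Φ * β τ * P)
      ≤ Bφ ^ 2 * (1 + (1 - l) * L) * ∑ i ∈ Finset.range (τ + 1), x ^ i := hfin
    _ ≤ Bφ ^ 2 * (1 + (1 - l) * L) * (1 / (1 - x)) := by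
        refine mul_le_mul_of_nonneg_left hgs ?_
        positivity
    _ = Bφ ^ 2 / (1 - x) * (1 + (1 - l) * L) := by ring
end

section
/- Let P be an N×N row-stochastic matrix, let γ, λ ∈ ℝ with 0 ≤ γλ < 1, let Φᵀ ∈ ℝ^{k×N}, let D, F, D₀, …, D_b, F₀, …, F_b be N×N real matrices, and set M = λD + (1−λ)F. Suppose β₀ = Φᵀ D₀ and β_τ = λΦᵀ D_τ + (1−λ)Φᵀ F_τ + γλ β_{τ−1} P for τ = 1, …, b. Then I − γλP is invertible with (I − γλP)⁻¹ = ∑_{τ=0}^∞ (γλ)^τ P^τ (the series converging entrywise), and Φᵀ M (I − γλP)⁻¹ − β_b = ∑_{τ=0}^{b−1} (γλ)^τ Φᵀ (λ(D − D_{b−τ}) + (1−λ)(F − F_{b−τ})) P^τ − (γλ)^b Φᵀ D₀ P^b + ∑_{τ=b}^∞ (γλ)^τ Φᵀ M P^τ. -/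
open Matrix BigOperators

section Aux

attribute [local instance] Matrix.linftyOpNormedAddCommGroup Matrix.linftyOpNormedSpace
  Matrix.linftyOpNormedRing Matrix.linftyOpNormedAlgebra

private theorem per_etd_aux (N k : ℕ)
    (P : Matrix (Fin N) (Fin N) ℝ)
    (hP0 : ∀ i j, 0 ≤ P i j) (hProw : ∀ i, ∑ j, P i j = 1)
    (γ l : ℝ) (h0 : 0 ≤ γ * l) (h1 : γ * l < 1)
    (Φt : Matrix (Fin k) (Fin N) ℝ)
    (D F : Matrix (Fin N) (Fin N) ℝ)
    (Dseq Fseq : ℕ → Matrix (Fin N) (Fin N) ℝ)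
    (b : ℕ)
    (β : ℕ → Matrix (Fin k) (Fin N) ℝ)
    (hβ0 : β 0 = Φt * Dseq 0)
    (hβ : ∀ τ, 1 ≤ τ → τ ≤ b →
      β τ = l • (Φt * Dseq τ) + (1 - l) • (Φt * Fseq τ) + (γ * l) • (β (τ - 1) * P)) :
    IsUnit ((1 : Matrix (Fin N) (Fin N) ℝ) - (γ * l) • P) ∧
    HasSum (fun τ : ℕ => (γ * l) ^ τ • P ^ τ)
      ((1 : Matrix (Fin N) (Fin N) ℝ) - (γ * l) • P)⁻¹ ∧
    Φt * (l • D + (1 - l) • F) * ((1 : Matrix (Fin N) (Fin N) ℝ) - (γ * l) • P)⁻¹ - β b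
      = (∑ τ ∈ Finset.range b, (γ * l) ^ τ •
            (Φt * (l • (D - Dseq (b - τ)) + (1 - l) • (F - Fseq (b - τ))) * P ^ τ))
        - (γ * l) ^ b • (Φt * Dseq 0 * P ^ b)
        + ∑' τ : ℕ, (γ * l) ^ (τ + b) • (Φt * (l • D + (1 - l) • F) * P ^ (τ + b)) := by
  set c : ℝ := γ * l with hc
  -- norm facts
  have hPn : ‖P‖ ≤ 1 := by
    rw [Matrix.linfty_opNorm_def]
    have h : ∀ i, ∑ j, ‖P i j‖₊ = 1 := by
      intro i
      have : ((∑ j, ‖P i j‖₊ : NNReal) : ℝ) = 1 := by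
        push_cast
        simp only [coe_nnnorm, Real.norm_eq_abs]
        rw [← hProw i]
        exact Finset.sum_congr rfl fun j _ => abs_of_nonneg (hP0 i j)
      exact_mod_cast this
    simp [h]
  have hx : ‖c • P‖ < 1 := by
    rw [norm_smul, Real.norm_eq_abs, abs_of_nonneg h0]
    calc c * ‖P‖ ≤ c * 1 := by nlinarith [norm_nonneg P]
    _ < 1 := by linarith
  set x := c • P with hxdef
  have hsum : Summable (fun n => x ^ n) := summable_geometric_of_norm_lt_one hx
  have hgeom : (∑' i : ℕ, x ^ i) * (1 - x) = 1 := geom_series_mul_neg x hx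
  have hunit : IsUnit (1 - x) := (Units.oneSub x hx).isUnit
  have hinv : (1 - x)⁻¹ = ∑' i : ℕ, x ^ i := Matrix.inv_eq_left_inv hgeom
  have hS : HasSum (fun n : ℕ => x ^ n) ((1 - x)⁻¹) := hinv ▸ hsum.hasSum
  have hxpow : ∀ n : ℕ, x ^ n = c ^ n • P ^ n := fun n => by rw [hxdef, smul_pow]
  refine ⟨hunit, by convert hS using 2 with n; rw [hxpow], ?_⟩
  -- left multiplication by A
  set A : Matrix (Fin k) (Fin N) ℝ := Φt * (l • D + (1 - l) • F) with hA
  let L : Matrix (Fin N) (Fin N) ℝ →ₗ[ℝ] Matrix (Fin k) (Fin N) ℝ :=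
    { toFun := fun X => A * X
      map_add' := fun X Y => Matrix.mul_add A X Y
      map_smul' := fun r X => by simp [Matrix.mul_smul] }
  have hLc : Continuous L := L.continuous_of_finiteDimensional
  have hAS : HasSum (fun n : ℕ => c ^ n • (A * P ^ n)) (A * (1 - x)⁻¹) := by
    have := hS.map L hLc
    convert this using 2 with n
    show c ^ n • (A * P ^ n) = A * x ^ n
    rw [hxpow, Matrix.mul_smul]
    rfl
  have hsplit : A * (1 - x)⁻¹
      = (∑ τ ∈ Finset.range b, c ^ τ • (A * P ^ τ))
        + ∑' τ : ℕ, c ^ (τ + b) • (A * P ^ (τ + b)) := by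
    rw [← hAS.tsum_eq, ← Summable.sum_add_tsum_nat_add b hAS.summable]
  -- closed form for β
  have hβform : ∀ m, m ≤ b →
      β m = (∑ τ ∈ Finset.range m, c ^ τ •
          ((l • (Φt * Dseq (m - τ)) + (1 - l) • (Φt * Fseq (m - τ))) * P ^ τ))
        + c ^ m • (Φt * Dseq 0 * P ^ m) := by
    intro m
    induction m with
    | zero => intro _; simp [hβ0]
    | succ n ih =>
      intro hm
      rw [hβ (n + 1) (by omega) hm, Nat.add_sub_cancel, ih (by omega)]
      rw [Finset.sum_range_succ']
      simp only [Nat.succ_sub_succ_eq_sub, pow_zero, one_smul, Nat.sub_zero, pow_zero,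
        Matrix.mul_one, pow_succ]
      rw [Matrix.add_mul, smul_add, Matrix.sum_mul, Finset.smul_sum]
      have e1 : ∀ τ, c • (c ^ τ • ((l • (Φt * Dseq (n - τ)) + (1 - l) • (Φt * Fseq (n - τ)))
          * P ^ τ) * P)
          = (c ^ τ * c) • ((l • (Φt * Dseq (n - τ)) + (1 - l) • (Φt * Fseq (n - τ)))
            * (P ^ τ * P)) := by
        intro τ
        rw [Matrix.smul_mul, smul_smul, mul_comm c, Matrix.mul_assoc]
      have e2 : c • (c ^ n • (Φt * Dseq 0 * P ^ n) * P)
          = (c ^ n * c) • (Φt * Dseq 0 * (P ^ n * P)) := by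
        rw [Matrix.smul_mul, smul_smul, mul_comm c, Matrix.mul_assoc]
      rw [e2]
      simp only [e1]
      abel
  rw [hsplit, hβform b le_rfl]
  have hterm : ∀ τ, c ^ τ • (A * P ^ τ)
      - c ^ τ • ((l • (Φt * Dseq (b - τ)) + (1 - l) • (Φt * Fseq (b - τ))) * P ^ τ)
      = c ^ τ • (Φt * (l • (D - Dseq (b - τ)) + (1 - l) • (F - Fseq (b - τ))) * P ^ τ) := by
    intro τ
    rw [← smul_sub, ← Matrix.sub_mul]
    congr 2
    simp only [hA, Matrix.mul_add, Matrix.mul_smul, Matrix.mul_sub, smul_sub]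
    abel
  calc (∑ τ ∈ Finset.range b, c ^ τ • (A * P ^ τ)) + (∑' τ : ℕ, c ^ (τ + b) • (A * P ^ (τ + b)))
      - ((∑ τ ∈ Finset.range b, c ^ τ •
          ((l • (Φt * Dseq (b - τ)) + (1 - l) • (Φt * Fseq (b - τ))) * P ^ τ))
        + c ^ b • (Φt * Dseq 0 * P ^ b))
      = (∑ τ ∈ Finset.range b, (c ^ τ • (A * P ^ τ)
          - c ^ τ • ((l • (Φt * Dseq (b - τ)) + (1 - l) • (Φt * Fseq (b - τ))) * P ^ τ)))
        - c ^ b • (Φt * Dseq 0 * P ^ b)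
        + ∑' τ : ℕ, c ^ (τ + b) • (A * P ^ (τ + b)) := by
        rw [Finset.sum_sub_distrib]; abel
    _ = _ := by rw [Finset.sum_congr rfl fun τ _ => hterm τ]

end Aux

/-- Bias identity for PER-ETD(λ). With `P` row-stochastic,
`0 ≤ γλ < 1`, `M = λD + (1-λ)F`, `β₀ = Φᵀ D₀` and
`β_τ = λ Φᵀ D_τ + (1-λ) Φᵀ F_τ + γλ β_{τ-1} P` for `τ = 1, …, b`:
`I - γλP` is invertible, `(I - γλP)⁻¹ = ∑_{τ=0}^∞ (γλ)^τ P^τ`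
(the series converging entrywise), and
`Φᵀ M (I - γλP)⁻¹ - β_b
  = ∑_{τ=0}^{b-1} (γλ)^τ Φᵀ (λ(D - D_{b-τ}) + (1-λ)(F - F_{b-τ})) P^τ
    - (γλ)^b Φᵀ D₀ P^b + ∑_{τ=b}^∞ (γλ)^τ Φᵀ M P^τ`. -/
theorem per_etd_lambda_bias_identity (N k : ℕ)
    (P : Matrix (Fin N) (Fin N) ℝ)
    (hP0 : ∀ i j, 0 ≤ P i j) (hProw : ∀ i, ∑ j, P i j = 1)
    (γ l : ℝ) (h0 : 0 ≤ γ * l) (h1 : γ * l < 1)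
    (Φt : Matrix (Fin k) (Fin N) ℝ)
    (D F : Matrix (Fin N) (Fin N) ℝ)
    (Dseq Fseq : ℕ → Matrix (Fin N) (Fin N) ℝ)
    (b : ℕ)
    (β : ℕ → Matrix (Fin k) (Fin N) ℝ)
    (hβ0 : β 0 = Φt * Dseq 0)
    (hβ : ∀ τ, 1 ≤ τ → τ ≤ b →
      β τ = l • (Φt * Dseq τ) + (1 - l) • (Φt * Fseq τ) + (γ * l) • (β (τ - 1) * P)) :
    IsUnit ((1 : Matrix (Fin N) (Fin N) ℝ) - (γ * l) • P) ∧
    HasSum (fun τ : ℕ => (γ * l) ^ τ • P ^ τ)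
      ((1 : Matrix (Fin N) (Fin N) ℝ) - (γ * l) • P)⁻¹ ∧
    Φt * (l • D + (1 - l) • F) * ((1 : Matrix (Fin N) (Fin N) ℝ) - (γ * l) • P)⁻¹ - β b
      = (∑ τ ∈ Finset.range b, (γ * l) ^ τ •
            (Φt * (l • (D - Dseq (b - τ)) + (1 - l) • (F - Fseq (b - τ))) * P ^ τ))
        - (γ * l) ^ b • (Φt * Dseq 0 * P ^ b)
        + ∑' τ : ℕ, (γ * l) ^ (τ + b) • (Φt * (l • D + (1 - l) • F) * P ^ (τ + b)) := by
  exact per_etd_aux N k P hP0 hProw γ l h0 h1 Φt D F Dseq Fseq b β hβ0 hβ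
end

section
/- (One-step descent inequality) Let Θ be a nonempty closed convex subset of ℝ^d, let T : ℝ^d → ℝ^d satisfy ‖T(θ₁) − T(θ₂)‖₂ ≤ L‖θ₁ − θ₂‖₂ for all θ₁, θ₂ (L > 0), let Ĝ ∈ ℝ^d, η ≥ 0 and θ_t ∈ ℝ^d, and let θ_{t+1} ∈ Θ be a minimizer over Θ of θ ↦ η⟨Ĝ, θ⟩ + (1/2)‖θ − θ_t‖₂². Then for every θ ∈ Θ: (1/2)‖θ_t − θ‖₂² ≥ η⟨T(θ_{t+1}), θ_{t+1} − θ⟩ + (1/2 − η²L²)‖θ_{t+1} − θ‖₂² + η⟨Ĝ − T(θ_t), θ_t − θ⟩ − η²‖Ĝ − T(θ_t)‖₂². -/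
open scoped RealInnerProductSpace BigOperators

lemma aux_limit (A C : ℝ) (hA0 : 0 ≤ A) (h : ∀ l : ℝ, 0 ≤ l → l < 1 → l * A ≤ C) :
    A ≤ C := by
  have hC0 : 0 ≤ C := by simpa using h 0 le_rfl one_pos
  by_contra hcon
  push_neg at hcon
  have hApos : 0 < A := lt_of_le_of_lt hC0 hcon
  have hlt : (C + A) / (2 * A) < 1 := by
    rw [div_lt_one (by positivity)]; linarith
  have h2 := h ((C + A) / (2 * A)) (by positivity) hlt
  have heq : (C + A) / (2 * A) * A = (C + A) / 2 := by
    field_simp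
  rw [heq] at h2
  linarith

/-- One-step descent inequality: Let `Θ ⊆ ℝ^d` be nonempty, closed,
convex, let `T` be `L`-Lipschitz (`L > 0`), `Ĝ ∈ ℝ^d`, `η ≥ 0`, and let
`θ_{t+1} ∈ Θ` minimize `θ ↦ η⟨Ĝ, θ⟩ + (1/2)‖θ - θ_t‖²` over `Θ`. Then for every
`θ ∈ Θ`:
`(1/2)‖θ_t - θ‖² ≥ η⟨T θ_{t+1}, θ_{t+1} - θ⟩ + (1/2 - η²L²)‖θ_{t+1} - θ‖²
  + η⟨Ĝ - T θ_t, θ_t - θ⟩ - η²‖Ĝ - T θ_t‖²`. -/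
theorem one_step_descent (d : ℕ) (Θ : Set (EuclideanSpace ℝ (Fin d)))
    (hne : Θ.Nonempty) (hcl : IsClosed Θ) (hcv : Convex ℝ Θ)
    (T : EuclideanSpace ℝ (Fin d) → EuclideanSpace ℝ (Fin d))
    (L : ℝ) (hL : 0 < L)
    (hT : ∀ θ₁ θ₂, ‖T θ₁ - T θ₂‖ ≤ L * ‖θ₁ - θ₂‖)
    (G θt : EuclideanSpace ℝ (Fin d)) (η : ℝ) (hη : 0 ≤ η)
    (θt1 : EuclideanSpace ℝ (Fin d)) (hmem : θt1 ∈ Θ)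
    (hmin : ∀ θ ∈ Θ,
      η * ⟪G, θt1⟫ + (1 / 2) * ‖θt1 - θt‖ ^ 2 ≤ η * ⟪G, θ⟫ + (1 / 2) * ‖θ - θt‖ ^ 2) :
    ∀ θ ∈ Θ,
      η * ⟪T θt1, θt1 - θ⟫ + (1 / 2 - η ^ 2 * L ^ 2) * ‖θt1 - θ‖ ^ 2
        + η * ⟪G - T θt, θt - θ⟫ - η ^ 2 * ‖G - T θt‖ ^ 2
      ≤ (1 / 2) * ‖θt - θ‖ ^ 2 := by
  intro θ hθ
  -- Step 1: strong minimality (via convex combinations)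
  have hlam : ∀ l : ℝ, 0 ≤ l → l < 1 →
      l * ((1/2) * ‖θt1 - θ‖ ^ 2) ≤
        (η * ⟪G, θ⟫ + (1/2) * ‖θ - θt‖ ^ 2)
          - (η * ⟪G, θt1⟫ + (1/2) * ‖θt1 - θt‖ ^ 2) := by
    intro l hl0 hl1
    have hmemc : l • θt1 + (1 - l) • θ ∈ Θ := hcv hmem hθ hl0 (by linarith) (by ring)
    have h := hmin _ hmemc
    have e1 : ⟪G, l • θt1 + (1 - l) • θ⟫ = l * ⟪G, θt1⟫ + (1 - l) * ⟪G, θ⟫ := by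
      rw [inner_add_right, real_inner_smul_right, real_inner_smul_right]
    have e2 : ‖(l • θt1 + (1 - l) • θ) - θt‖ ^ 2
        = l * ‖θt1 - θt‖ ^ 2 + (1 - l) * ‖θ - θt‖ ^ 2 - l * (1 - l) * ‖θt1 - θ‖ ^ 2 := by
      rw [← real_inner_self_eq_norm_sq, ← real_inner_self_eq_norm_sq,
        ← real_inner_self_eq_norm_sq, ← real_inner_self_eq_norm_sq]
      simp only [inner_sub_left, inner_sub_right, inner_add_left, inner_add_right,
        real_inner_smul_left, real_inner_smul_right]
      ring_nf
    rw [e1, e2] at h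
    have hl1' : 0 < 1 - l := by linarith
    nlinarith [h]
  have key : η * ⟪G, θt1⟫ + (1/2) * ‖θt1 - θt‖ ^ 2 + (1/2) * ‖θt1 - θ‖ ^ 2
      ≤ η * ⟪G, θ⟫ + (1/2) * ‖θ - θt‖ ^ 2 := by
    have hAC := aux_limit ((1/2) * ‖θt1 - θ‖ ^ 2)
      ((η * ⟪G, θ⟫ + (1/2) * ‖θ - θt‖ ^ 2) - (η * ⟪G, θt1⟫ + (1/2) * ‖θt1 - θt‖ ^ 2))
      (by positivity) hlam
    linarith
  -- Step 2: combine with Cauchy-Schwarz and Lipschitz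
  set u := G - T θt with hu
  have i1 : ⟪G, θt1⟫ - ⟪G, θ⟫
      = ⟪T θt1, θt1 - θ⟫ + ⟪u, θt1 - θ⟫ + ⟪T θt - T θt1, θt1 - θ⟫ := by
    simp only [hu, inner_sub_left, inner_sub_right]
    ring
  have i2 : ⟪u, θt - θ⟫ = ⟪u, θt - θt1⟫ + ⟪u, θt1 - θ⟫ := by
    simp only [inner_sub_right]; ring
  have hcs1 : ⟪u, θt - θt1⟫ ≤ ‖u‖ * ‖θt - θt1‖ := real_inner_le_norm _ _
  have hcs2 : ⟪T θt - T θt1, θ - θt1⟫ ≤ ‖T θt - T θt1‖ * ‖θ - θt1‖ := real_inner_le_norm _ _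
  have hlip : ‖T θt - T θt1‖ ≤ L * ‖θt - θt1‖ := hT θt θt1
  have hnr1 : ‖θt - θt1‖ = ‖θt1 - θt‖ := norm_sub_rev _ _
  have hnr2 : ‖θ - θt1‖ = ‖θt1 - θ‖ := norm_sub_rev _ _
  have hnr3 : ‖θ - θt‖ = ‖θt - θ‖ := norm_sub_rev _ _
  have i3 : ⟪T θt - T θt1, θ - θt1⟫ = -⟪T θt - T θt1, θt1 - θ⟫ := by
    simp only [inner_sub_right]; ring
  rw [hnr1] at hcs1 hlip
  rw [hnr2, i3] at hcs2
  rw [hnr3] at key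
  -- multiply CS inequalities by η ≥ 0
  have m1 : η * ⟪u, θt - θt1⟫ ≤ η * (‖u‖ * ‖θt1 - θt‖) :=
    mul_le_mul_of_nonneg_left hcs1 hη
  have m2 : η * (-⟪T θt - T θt1, θt1 - θ⟫) ≤ η * ((L * ‖θt1 - θt‖) * ‖θt1 - θ‖) :=
    mul_le_mul_of_nonneg_left (hcs2.trans (by nlinarith [norm_nonneg (θt1 - θ)])) hη
  nlinarith [sq_nonneg (η * ‖u‖ - ‖θt1 - θt‖ / 2),
    sq_nonneg (‖θt1 - θt‖ / 2 - η * L * ‖θt1 - θ‖), key, i1, i2, m1, m2]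
end

section
/- (Deterministic core of the PER-ETD(0) variance bound, Proposition 2) Let P be an N×N row-stochastic matrix, let Q be an N×N matrix with nonnegative entries whose rows each sum to at most ρ (ρ > 0), let 0 < γ < 1 and L ≥ 0, and let b ≥ 1 be an integer. Let d₁, …, d_b ∈ ℝ^N be probability vectors, let f₀, …, f_{b−1} ∈ ℝ^N be nonnegative vectors with 𝟙ᵀ f_τ ≤ 1 + L for all τ, let r₀ ∈ ℝ^N be nonnegative with 𝟙ᵀ r₀ = 1, and define r_τ = d_τ + 2γ Pᵀ f_{τ−1} + γ² Qᵀ r_{τ−1} for τ = 1, …, b. Then: (a) if γ²ρ > 1, 𝟙ᵀ r_b ≤ ((3 + 2γL)/(γ²ρ − 1) + 1) · (γ²ρ)^b; (b) if γ²ρ = 1, 𝟙ᵀ r_b ≤ (3 + 2γL) · b + 1; (c) if γ²ρ < 1, 𝟙ᵀ r_b ≤ (3 + 2γL)/(1 − γ²ρ) + 1. -/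
open Matrix BigOperators

/-- Deterministic core of the PER-ETD(0) variance bound, Proposition 2:
With `P` row-stochastic, `Q` nonnegative with row sums at most `ρ > 0`, `0 < γ < 1`,
`L ≥ 0`, `b ≥ 1`, probability vectors `d₁, …, d_b`, nonnegative vectors
`f₀, …, f_{b-1}` with `𝟙ᵀ f_τ ≤ 1 + L`, `r₀ ≥ 0` with `𝟙ᵀ r₀ = 1`, and the
recursion `r_τ = d_τ + 2γ Pᵀ f_{τ-1} + γ² Qᵀ r_{τ-1}` for `τ = 1, …, b`:
(a) if `γ²ρ > 1`, `𝟙ᵀ r_b ≤ ((3 + 2γL)/(γ²ρ - 1) + 1) (γ²ρ)^b`;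
(b) if `γ²ρ = 1`, `𝟙ᵀ r_b ≤ (3 + 2γL) b + 1`;
(c) if `γ²ρ < 1`, `𝟙ᵀ r_b ≤ (3 + 2γL)/(1 - γ²ρ) + 1`. -/
theorem per_etd0_variance_bound (N : ℕ)
    (P Q : Matrix (Fin N) (Fin N) ℝ)
    (hP0 : ∀ i j, 0 ≤ P i j) (hProw : ∀ i, ∑ j, P i j = 1)
    (ρ : ℝ) (hρ : 0 < ρ)
    (hQ0 : ∀ i j, 0 ≤ Q i j) (hQrow : ∀ i, ∑ j, Q i j ≤ ρ)
    (γ L : ℝ) (hγ0 : 0 < γ) (hγ1 : γ < 1) (hL : 0 ≤ L)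
    (b : ℕ) (hb : 1 ≤ b)
    (dseq : ℕ → Fin N → ℝ)
    (hd0 : ∀ τ, 1 ≤ τ → τ ≤ b → ∀ i, 0 ≤ dseq τ i)
    (hd1 : ∀ τ, 1 ≤ τ → τ ≤ b → ∑ i, dseq τ i = 1)
    (fseq : ℕ → Fin N → ℝ)
    (hf0 : ∀ τ, τ ≤ b - 1 → ∀ i, 0 ≤ fseq τ i)
    (hf1 : ∀ τ, τ ≤ b - 1 → ∑ i, fseq τ i ≤ 1 + L)
    (r : ℕ → Fin N → ℝ)
    (hr00 : ∀ i, 0 ≤ r 0 i) (hr01 : ∑ i, r 0 i = 1)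
    (hrec : ∀ τ, 1 ≤ τ → τ ≤ b →
      r τ = dseq τ + (2 * γ) • (Pᵀ *ᵥ fseq (τ - 1)) + γ ^ 2 • (Qᵀ *ᵥ r (τ - 1))) :
    (1 < γ ^ 2 * ρ →
        ∑ i, r b i ≤ ((3 + 2 * γ * L) / (γ ^ 2 * ρ - 1) + 1) * (γ ^ 2 * ρ) ^ b) ∧
    (γ ^ 2 * ρ = 1 → ∑ i, r b i ≤ (3 + 2 * γ * L) * b + 1) ∧
    (γ ^ 2 * ρ < 1 → ∑ i, r b i ≤ (3 + 2 * γ * L) / (1 - γ ^ 2 * ρ) + 1) := by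

  set a := γ ^ 2 * ρ with ha
  set c := 3 + 2 * γ * L with hc
  have ha0 : 0 ≤ a := by positivity
  have hc0 : 0 ≤ c := by nlinarith
  have key : ∀ τ, τ ≤ b → (∀ i, 0 ≤ r τ i) ∧
      ∑ i, r τ i ≤ c * ∑ k ∈ Finset.range τ, a ^ k + a ^ τ := by
    intro τ
    induction τ with
    | zero => intro _; exact ⟨hr00, by simp [hr01]⟩
    | succ n ih =>
      intro hnb
      obtain ⟨hpos, hsum⟩ := ih (Nat.le_of_succ_le hnb)
      have hrecn := hrec (n + 1) (Nat.succ_le_succ (Nat.zero_le n)) hnb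
      simp only [Nat.add_sub_cancel] at hrecn
      have hfn : n ≤ b - 1 := Nat.le_pred_of_lt hnb
      have hd0' := hd0 (n + 1) (Nat.succ_le_succ (Nat.zero_le n)) hnb
      have hd1' := hd1 (n + 1) (Nat.succ_le_succ (Nat.zero_le n)) hnb
      have hPmv : ∀ i, 0 ≤ (Pᵀ *ᵥ fseq n) i := by
        intro i
        simp only [mulVec, dotProduct, transpose_apply]
        apply Finset.sum_nonneg
        intro j _
        exact mul_nonneg (hP0 j i) (hf0 n hfn j)
      have hQmv : ∀ i, 0 ≤ (Qᵀ *ᵥ r n) i := by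
        intro i
        simp only [mulVec, dotProduct, transpose_apply]
        apply Finset.sum_nonneg
        intro j _
        exact mul_nonneg (hQ0 j i) (hpos j)
      have hnn : ∀ i, 0 ≤ r (n + 1) i := by
        intro i
        rw [hrecn]
        simp only [Pi.add_apply, Pi.smul_apply, smul_eq_mul]
        have := hPmv i
        have := hQmv i
        have := hd0' i
        nlinarith
      refine ⟨hnn, ?_⟩
      have hPsum : ∑ i, (Pᵀ *ᵥ fseq n) i = ∑ j, fseq n j := by
        simp only [mulVec, dotProduct, transpose_apply]
        rw [Finset.sum_comm]
        refine Finset.sum_congr rfl fun j _ => ?_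
        rw [← Finset.sum_mul, hProw j, one_mul]
      have hQsum : ∑ i, (Qᵀ *ᵥ r n) i ≤ ρ * ∑ j, r n j := by
        simp only [mulVec, dotProduct, transpose_apply]
        rw [Finset.sum_comm, Finset.mul_sum]
        refine Finset.sum_le_sum fun j _ => ?_
        rw [← Finset.sum_mul]
        exact mul_le_mul_of_nonneg_right (hQrow j) (hpos j)
      have hrsum : ∑ i, r (n + 1) i
          = 1 + 2 * γ * (∑ j, fseq n j) + γ ^ 2 * (∑ i, (Qᵀ *ᵥ r n) i) := by
        rw [hrecn]
        simp only [Pi.add_apply, Pi.smul_apply, smul_eq_mul]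
        rw [Finset.sum_add_distrib, Finset.sum_add_distrib, ← Finset.mul_sum,
          ← Finset.mul_sum, hd1', hPsum]
      rw [hrsum, geom_sum_succ]
      have hf1' := hf1 n hfn
      have hrn0 : 0 ≤ ∑ j, r n j := Finset.sum_nonneg fun j _ => hpos j
      have hγ2 : (0:ℝ) < γ ^ 2 := by positivity
      have h1 : γ ^ 2 * (∑ i, (Qᵀ *ᵥ r n) i) ≤ a * ∑ j, r n j := by
        rw [ha, mul_assoc]
        exact mul_le_mul_of_nonneg_left hQsum hγ2.le
      have h2 : a * (∑ j, r n j) ≤ a * (c * ∑ k ∈ Finset.range n, a ^ k + a ^ n) :=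
        mul_le_mul_of_nonneg_left hsum ha0
      have h3 : 1 + 2 * γ * (∑ j, fseq n j) ≤ c := by nlinarith
      have hS0 : 0 ≤ ∑ k ∈ Finset.range n, a ^ k :=
        Finset.sum_nonneg fun k _ => pow_nonneg ha0 k
      calc 1 + 2 * γ * (∑ j, fseq n j) + γ ^ 2 * (∑ i, (Qᵀ *ᵥ r n) i)
          ≤ c + a * (c * ∑ k ∈ Finset.range n, a ^ k + a ^ n) := by linarith
        _ = c * (a * ∑ k ∈ Finset.range n, a ^ k + 1) + a ^ (n + 1) := by ring
  obtain ⟨-, hub⟩ := key b le_rfl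
  have hS0 : 0 ≤ ∑ k ∈ Finset.range b, a ^ k :=
    Finset.sum_nonneg fun k _ => pow_nonneg ha0 k
  refine ⟨?_, ?_, ?_⟩
  · intro hgt
    have h1 : (0:ℝ) < a - 1 := by linarith
    have hA1 : (1:ℝ) ≤ a ^ b := one_le_pow₀ (by linarith)
    have hS : ∑ k ∈ Finset.range b, a ^ k = (a ^ b - 1) / (a - 1) :=
      geom_sum_eq (by linarith) b
    rw [hS] at hub
    have : c * ((a ^ b - 1) / (a - 1)) ≤ c * (a ^ b / (a - 1)) := by
      gcongr
      linarith
    calc ∑ i, r b i ≤ c * ((a ^ b - 1) / (a - 1)) + a ^ b := hub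
      _ ≤ c * (a ^ b / (a - 1)) + a ^ b := by linarith
      _ = (c / (a - 1) + 1) * a ^ b := by field_simp
  · intro heq
    rw [heq] at hub
    simpa using hub
  · intro hlt
    have h1 : (0:ℝ) < 1 - a := by linarith
    have hA1 : a ^ b ≤ 1 := pow_le_one₀ ha0 (by linarith)
    have hS : ∑ k ∈ Finset.range b, a ^ k = (1 - a ^ b) / (1 - a) := by
      rw [geom_sum_eq (by linarith) b, ← neg_div_neg_eq]
      ring_nf
    rw [hS] at hub
    have h2 : c * ((1 - a ^ b) / (1 - a)) ≤ c / (1 - a) := by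
      rw [← mul_div_assoc, div_le_div_iff₀ h1 h1]
      nlinarith [mul_nonneg (mul_nonneg hc0 h1.le) (pow_nonneg ha0 b)]
    linarith
end

section
/- Let μ and L be real numbers with 0 < μ ≤ L, set t₀ = 8L²/μ², and for each natural number t set η_t = 2/(μ(t + t₀)) and α_t = (t + t₀ + 1)(t + t₀ + 2). Then for every t ≥ 0: (i) α_t (1 + 2μη_t − 2L²η_t²) ≥ (t + t₀ + 1)(t + t₀ + 2)(t + t₀ + 3)/(t + t₀); (ii) for every real c with 0 ≤ c ≤ μ/5, α_{t+1}(1 + 2cη_{t+1} + 8c²η_{t+1}²) ≤ (t + t₀ + 2)²(t + t₀ + 3)/(t + t₀ + 1); and consequently (iii) α_t (1 + 2μη_t − 2L²η_t²) − α_{t+1}(1 + 2cη_{t+1} + 8c²η_{t+1}²) ≥ (t + t₀ + 2)(t + t₀ + 3)/((t + t₀)(t + t₀ + 1)) > 0. -/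
set_option maxHeartbeats 800000


/-- Stepsize/weight arithmetic for the convergence proof of Theorem 1.
With `0 < μ ≤ L`, `t₀ = 8L²/μ²`, `η_t = 2/(μ(t + t₀))`,
`α_t = (t + t₀ + 1)(t + t₀ + 2)`, for every `t : ℕ`:
(i)  `α_t (1 + 2μη_t - 2L²η_t²) ≥ (t+t₀+1)(t+t₀+2)(t+t₀+3)/(t+t₀)`;
(ii) for `0 ≤ c ≤ μ/5`,
     `α_{t+1}(1 + 2cη_{t+1} + 8c²η_{t+1}²) ≤ (t+t₀+2)²(t+t₀+3)/(t+t₀+1)`;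
(iii) consequently the difference is at least
     `(t+t₀+2)(t+t₀+3)/((t+t₀)(t+t₀+1)) > 0`. -/
theorem stepsize_weight_arith (μ L : ℝ) (hμ : 0 < μ) (hμL : μ ≤ L) (t : ℕ) :
    let t₀ : ℝ := 8 * L ^ 2 / μ ^ 2
    let η : ℕ → ℝ := fun s => 2 / (μ * ((s : ℝ) + t₀))
    let α : ℕ → ℝ := fun s => ((s : ℝ) + t₀ + 1) * ((s : ℝ) + t₀ + 2)
    (α t * (1 + 2 * μ * η t - 2 * L ^ 2 * (η t) ^ 2) ≥
      ((t : ℝ) + t₀ + 1) * ((t : ℝ) + t₀ + 2) * ((t : ℝ) + t₀ + 3) / ((t : ℝ) + t₀)) ∧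
    (∀ c : ℝ, 0 ≤ c → c ≤ μ / 5 →
      α (t + 1) * (1 + 2 * c * η (t + 1) + 8 * c ^ 2 * (η (t + 1)) ^ 2) ≤
        ((t : ℝ) + t₀ + 2) ^ 2 * ((t : ℝ) + t₀ + 3) / ((t : ℝ) + t₀ + 1)) ∧
    (∀ c : ℝ, 0 ≤ c → c ≤ μ / 5 →
      α t * (1 + 2 * μ * η t - 2 * L ^ 2 * (η t) ^ 2)
          - α (t + 1) * (1 + 2 * c * η (t + 1) + 8 * c ^ 2 * (η (t + 1)) ^ 2) ≥
        ((t : ℝ) + t₀ + 2) * ((t : ℝ) + t₀ + 3) / (((t : ℝ) + t₀) * ((t : ℝ) + t₀ + 1)) ∧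
      0 < ((t : ℝ) + t₀ + 2) * ((t : ℝ) + t₀ + 3) /
            (((t : ℝ) + t₀) * ((t : ℝ) + t₀ + 1))) := by
  intro t₀ η α
  have hη : ∀ s : ℕ, η s = 2 / (μ * ((s : ℝ) + t₀)) := fun s => rfl
  have hα : ∀ s : ℕ, α s = ((s : ℝ) + t₀ + 1) * ((s : ℝ) + t₀ + 2) := fun s => rfl
  have ht0def : t₀ = 8 * L ^ 2 / μ ^ 2 := rfl
  clear_value t₀
  simp only [hη, hα]
  clear hη hα
  have hμ2 : (0:ℝ) < μ ^ 2 := by positivity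
  have ht0 : (8:ℝ) ≤ t₀ := by
    rw [ht0def, le_div_iff₀ hμ2]; nlinarith
  have htn : (0:ℝ) ≤ (t:ℝ) := Nat.cast_nonneg t
  push_cast
  rw [show (t:ℝ) + 1 + t₀ = (t:ℝ) + t₀ + 1 by ring]
  set T : ℝ := (t:ℝ) + t₀ with hTdef
  clear_value T
  have hT8 : (8:ℝ) ≤ T := by rw [hTdef]; linarith
  have hTt0 : t₀ ≤ T := by rw [hTdef]; linarith
  have hTpos : (0:ℝ) < T := by linarith
  have hSpos : (0:ℝ) < T + 1 := by linarith
  have hμT : μ * T ≠ 0 := by positivity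
  have e1 : 2 * μ * (2 / (μ * T)) = 4 / T := by field_simp; ring
  have e2 : 2 * L ^ 2 * (2 / (μ * T)) ^ 2 = t₀ / T ^ 2 := by
    rw [ht0def]; field_simp; ring
  have hfac1 : (0:ℝ) ≤ (T + 1) * (T + 2) := by nlinarith
  have hfac2 : (0:ℝ) ≤ (T + 2) * (T + 3) := by nlinarith
  have hi : (T + 1) * (T + 2) * (1 + 2 * μ * (2 / (μ * T)) - 2 * L ^ 2 * (2 / (μ * T)) ^ 2) ≥
      (T + 1) * (T + 2) * (T + 3) / T := by
    rw [e1, e2, ge_iff_le, div_le_iff₀ hTpos]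
    have h1 : t₀ / T ^ 2 ≤ 1 / T := by
      rw [div_le_div_iff₀ (by positivity) hTpos]; nlinarith
    have h2 : (1:ℝ) + 3 / T ≤ 1 + 4 / T - t₀ / T ^ 2 := by
      have : (4:ℝ) / T = 3 / T + 1 / T := by ring
      linarith
    have h3 : ((1:ℝ) + 3 / T) * T = T + 3 := by field_simp
    have h4 : T + 3 ≤ (1 + 4 / T - t₀ / T ^ 2) * T := by
      rw [← h3]; exact mul_le_mul_of_nonneg_right h2 hTpos.le
    nlinarith [mul_le_mul_of_nonneg_left h4 hfac1]
  have hii : ∀ c : ℝ, 0 ≤ c → c ≤ μ / 5 →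
      (T + 1 + 1) * (T + 1 + 2) *
        (1 + 2 * c * (2 / (μ * (T + 1))) + 8 * c ^ 2 * (2 / (μ * (T + 1))) ^ 2) ≤
      (T + 2) ^ 2 * (T + 3) / (T + 1) := by
    intro c hc0 hc
    have hηpos : (0:ℝ) < 2 / (μ * (T + 1)) := by positivity
    have hb1 : 2 * c * (2 / (μ * (T + 1))) ≤ 4 / (5 * (T + 1)) := by
      have h := mul_le_mul_of_nonneg_right (show 2 * c ≤ 2 * (μ/5) by linarith) hηpos.le
      have he : 2 * (μ/5) * (2 / (μ * (T + 1))) = 4 / (5 * (T + 1)) := by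
        field_simp; ring
      linarith [he ▸ h]
    have hb2 : 8 * c ^ 2 * (2 / (μ * (T + 1))) ^ 2 ≤ 32 / (25 * (T + 1) ^ 2) := by
      have hc2 : c ^ 2 ≤ (μ/5) ^ 2 := by nlinarith
      have h := mul_le_mul_of_nonneg_right
        (show 8 * c ^ 2 ≤ 8 * (μ/5) ^ 2 by linarith) (show (0:ℝ) ≤ (2 / (μ * (T+1)))^2 by positivity)
      have he : 8 * (μ/5) ^ 2 * (2 / (μ * (T + 1))) ^ 2 = 32 / (25 * (T + 1) ^ 2) := by
        field_simp; ring
      linarith [he ▸ h]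
    have inner : 1 + 4 / (5 * (T + 1)) + 32 / (25 * (T + 1) ^ 2) ≤ (T + 2) / (T + 1) := by
      have hrw : 1 + 4 / (5 * (T + 1)) + 32 / (25 * (T + 1) ^ 2)
          = (25 * (T + 1) ^ 2 + 20 * (T + 1) + 32) / (25 * (T + 1) ^ 2) := by
        field_simp; ring
      rw [hrw, div_le_div_iff₀ (by positivity) hSpos]
      nlinarith
    have step1 : (T + 2) * (T + 3) *
        (1 + 2 * c * (2 / (μ * (T + 1))) + 8 * c ^ 2 * (2 / (μ * (T + 1))) ^ 2) ≤
        (T + 2) * (T + 3) * (1 + 4 / (5 * (T + 1)) + 32 / (25 * (T + 1) ^ 2)) :=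
      mul_le_mul_of_nonneg_left (by linarith) hfac2
    have step2 : (T + 2) * (T + 3) * (1 + 4 / (5 * (T + 1)) + 32 / (25 * (T + 1) ^ 2)) ≤
        (T + 2) ^ 2 * (T + 3) / (T + 1) := by
      have h := mul_le_mul_of_nonneg_left inner hfac2
      have he : (T + 2) * (T + 3) * ((T + 2) / (T + 1)) = (T + 2) ^ 2 * (T + 3) / (T + 1) := by
        field_simp
      linarith [he ▸ h]
    have hre : T + 1 + 1 = T + 2 := by ring
    have hre2 : T + 1 + 2 = T + 3 := by ring
    rw [hre, hre2]
    linarith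
  refine ⟨hi, hii, fun c hc0 hc => ⟨?_, by positivity⟩⟩
  have key : (T + 1) * (T + 2) * (T + 3) / T - (T + 2) ^ 2 * (T + 3) / (T + 1)
      = (T + 2) * (T + 3) / (T * (T + 1)) := by
    field_simp
    ring
  have h2 := hii c hc0 hc
  linarith [key.ge]
end
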